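/- arXiv:2305.16089 — 3 statements merged into one kernel-verified Lean document; each statement's English description precedes it below -/
import Mathlib

section
/- For every integer n ≥ 2 and every integer h, one has q_{n,n}(h) ≤ q_{n,n−1}(h) + (n − 1) in ℤ ∪ {+∞}, where q_{n,n−1} denotes the function q_{m+1,m} with m = n − 1. -/
open Classical in
/-- The quantum lower bound function `q_{n,n}` for the Khovanov homology of `T(n,n)`:
`+∞` outside `[0, ⌊n²/2⌋]`, `n² - 2n` at `h = 0`, and `n² + 2⌈h/2⌉ - 2p` for
`2(p+1)(q-1) < h ≤ 2pq` where `p ≥ q ≥ 1`, `p + q = n` (with `q = n - p`). -/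
noncomputable def qnn (n h : ℤ) : WithTop ℤ :=
  if h < 0 ∨ n ^ 2 / 2 < h then ⊤
  else if h = 0 then ((n ^ 2 - 2 * n : ℤ) : WithTop ℤ)
  else if hc : ∃ p : ℤ, n - p ≤ p ∧ 1 ≤ n - p ∧
      2 * (p + 1) * (n - p - 1) < h ∧ h ≤ 2 * p * (n - p)
    then ((n ^ 2 + 2 * ((h + 1) / 2) - 2 * hc.choose : ℤ) : WithTop ℤ)
  else ⊤

open Classical in
/-- The quantum lower bound function `q_{n+1,n}` for the Khovanov homology of `T(n+1,n)`:
`+∞` outside `[0, ⌊n²/2⌋ + ⌊n/2⌋]`; `q_{n,n}(h) + n - 3` at `h = 2pq + 1 ≤ ⌊n²/2⌋`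
(`p ≥ q ≥ 1`, `p + q = n`); `q_{n,n}(h) + n - 1` at other `h` with `0 ≤ h ≤ ⌊n²/2⌋`;
and `⌊n²/2⌋ + 2h - 1` for `⌊n²/2⌋ ≤ h ≤ ⌊n²/2⌋ + ⌊n/2⌋`. -/
noncomputable def qn1n (n h : ℤ) : WithTop ℤ :=
  if h < 0 ∨ n ^ 2 / 2 + n / 2 < h then ⊤
  else if ∃ p : ℤ, n - p ≤ p ∧ 1 ≤ n - p ∧ h = 2 * p * (n - p) + 1 ∧ h ≤ n ^ 2 / 2
    then qnn n h + ((n - 3 : ℤ) : WithTop ℤ)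
  else if h ≤ n ^ 2 / 2 then qnn n h + ((n - 1 : ℤ) : WithTop ℤ)
  else ((n ^ 2 / 2 + 2 * h - 1 : ℤ) : WithTop ℤ)

/-- The condition that `h` lies in the interval associated to `p` for `q_{n,n}`. -/
def QCond (n h p : ℤ) : Prop :=
  n - p ≤ p ∧ 1 ≤ n - p ∧ 2 * (p + 1) * (n - p - 1) < h ∧ h ≤ 2 * p * (n - p)

theorem qcond_unique {n h p p' : ℤ} (hp : QCond n h p) (hp' : QCond n h p') : p = p' := by
  obtain ⟨a1, a2, a3, a4⟩ := hp
  obtain ⟨b1, b2, b3, b4⟩ := hp'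
  by_contra hne
  rcases lt_or_gt_of_ne hne with hlt | hlt
  · nlinarith [mul_nonneg (show (0:ℤ) ≤ p' - (p + 1) by omega)
      (show (0:ℤ) ≤ (p + 1) + p' - n by omega)]
  · nlinarith [mul_nonneg (show (0:ℤ) ≤ p - (p' + 1) by omega)
      (show (0:ℤ) ≤ (p' + 1) + p - n by omega)]

theorem qcond_exists (n h : ℤ) (hn : 2 ≤ n) (h0 : 0 < h) (hh : 2 * h ≤ n ^ 2) :
    ∃ p, QCond n h p := by
  have hinh : ∃ p : ℤ, n ≤ 2 * p ∧ p ≤ n - 1 ∧ h ≤ 2 * p * (n - p) := by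
    refine ⟨(n + 1) / 2, by omega, by omega, ?_⟩
    rcases Int.even_or_odd n with ⟨a, ha⟩ | ⟨a, ha⟩
    · have he : (n + 1) / 2 = a := by omega
      rw [he]
      nlinarith
    · have he : (n + 1) / 2 = a + 1 := by omega
      rw [he]
      have key : 2 * h ≤ 4 * a ^ 2 + 4 * a + 1 := by nlinarith
      obtain ⟨k, hk⟩ : ∃ k, a ^ 2 = k := ⟨_, rfl⟩
      have h2 : h ≤ 2 * k + 2 * a := by rw [hk] at key; omega
      nlinarith
  obtain ⟨p, ⟨hp1, hp2, hp3⟩, hmax⟩ := Int.exists_greatest_of_bdd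
      (P := fun p => n ≤ 2 * p ∧ p ≤ n - 1 ∧ h ≤ 2 * p * (n - p))
      ⟨n - 1, fun z hz => hz.2.1⟩ hinh
  · refine ⟨p, by omega, by omega, ?_, hp3⟩
    by_cases hpe : p = n - 1
    · have : 2 * (p + 1) * (n - p - 1) = 0 := by rw [hpe]; ring
      omega
    · have h1 : n ≤ 2 * (p + 1) := by omega
      have h2 : p + 1 ≤ n - 1 := by omega
      by_contra hcon
      push_neg at hcon
      have := hmax (p + 1) ⟨h1, h2, by linarith⟩
      omega

open Classical in
theorem qnn_eval (n h p : ℤ) (h0 : 0 < h) (hp : QCond n h p) :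
    qnn n h = ((n ^ 2 + 2 * ((h + 1) / 2) - 2 * p : ℤ) : WithTop ℤ) := by
  obtain ⟨a1, a2, a3, a4⟩ := hp
  have h2 : 2 * h ≤ n ^ 2 := by nlinarith [sq_nonneg (n - 2 * p)]
  have hhle : h ≤ n ^ 2 / 2 := by
    obtain ⟨k, hk⟩ : ∃ k, n ^ 2 = k := ⟨_, rfl⟩
    rw [hk] at h2 ⊢; omega
  have hex : ∃ p : ℤ, n - p ≤ p ∧ 1 ≤ n - p ∧
      2 * (p + 1) * (n - p - 1) < h ∧ h ≤ 2 * p * (n - p) := ⟨p, a1, a2, a3, a4⟩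
  rw [qnn, if_neg (by push_neg; exact ⟨by omega, hhle⟩), if_neg (by omega : ¬ h = 0),
    dif_pos hex]
  have : hex.choose = p := qcond_unique hex.choose_spec ⟨a1, a2, a3, a4⟩
  rw [this]

/-- Equation (d) of Lemma 5.3: for `n ≥ 2` and every integer `h`,
`q_(n,n)(h) ≤ q_(n,n-1)(h) + (n - 1)`, where `q_(n,n-1)` is `q_(m+1,m)` with
`m = n - 1`. -/
theorem qnn_le_qn1n_add (n : ℤ) (hn : 2 ≤ n) (h : ℤ) :
    qnn n h ≤ qn1n (n - 1) h + ((n - 1 : ℤ) : WithTop ℤ) := by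
  set m := n - 1 with hm
  have hm1 : 1 ≤ m := by omega
  have hsq : m ^ 2 = n ^ 2 - 2 * n + 1 := by rw [hm]; ring
  have hmsq : 0 ≤ m ^ 2 / 2 := Int.ediv_nonneg (sq_nonneg m) (by norm_num)
  have hm2 : 0 ≤ m / 2 := Int.ediv_nonneg (by omega) (by norm_num)
  rcases lt_trichotomy h 0 with hneg | rfl | hpos
  · rw [qn1n, if_pos (Or.inl hneg), WithTop.top_add]
    exact le_top
  · -- h = 0
    have e1 : qnn n 0 = ((n ^ 2 - 2 * n : ℤ) : WithTop ℤ) := by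
      rw [qnn, if_neg (by
        push_neg
        exact ⟨le_refl 0, Int.ediv_nonneg (sq_nonneg n) (by norm_num)⟩), if_pos rfl]
    have e2 : qnn m 0 = ((m ^ 2 - 2 * m : ℤ) : WithTop ℤ) := by
      rw [qnn, if_neg (by push_neg; exact ⟨le_refl 0, hmsq⟩), if_pos rfl]
    have e3 : qn1n m 0 = qnn m 0 + ((m - 1 : ℤ) : WithTop ℤ) := by
      rw [qn1n, if_neg (by push_neg; exact ⟨le_refl 0, by omega⟩), if_neg ?_, if_pos hmsq]
      rintro ⟨p, hp1, hp2, hp3, -⟩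
      have : (2 : ℤ) ∣ (0 - 1) := ⟨p * (m - p), by linarith⟩
      norm_num at this
    rw [e1, e3, e2, ← WithTop.coe_add, ← WithTop.coe_add, WithTop.coe_le_coe]
    linarith
  · by_cases hc5 : m ^ 2 / 2 + m / 2 < h
    · rw [qn1n, if_pos (Or.inr hc5), WithTop.top_add]
      exact le_top
    · push_neg at hc5
      by_cases hc3 : h ≤ m ^ 2 / 2
      · -- main case: 0 < h ≤ ⌊m²/2⌋
        have h2m : 2 * h ≤ m ^ 2 := by
          obtain ⟨k, hk⟩ : ∃ k, m ^ 2 = k := ⟨_, rfl⟩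
          rw [hk] at hc3 ⊢; omega
        have hmge : 2 ≤ m := by
          by_contra hx
          have hm1' : m = 1 := by omega
          rw [hm1'] at h2m; norm_num at h2m; omega
        obtain ⟨pn, hpn⟩ := qcond_exists n h (by omega) hpos (by nlinarith)
        have eL := qnn_eval n h pn hpos hpn
        obtain ⟨c1, c2, c3, c4⟩ := hpn
        rw [qn1n, if_neg (by push_neg; exact ⟨by omega, by omega⟩)]
        by_cases hsp : ∃ p : ℤ, m - p ≤ p ∧ 1 ≤ m - p ∧ h = 2 * p * (m - p) + 1 ∧
            h ≤ m ^ 2 / 2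
        · rw [if_pos hsp]
          obtain ⟨p, hp1, hp2, hp3, -⟩ := hsp
          have hkey : m + 2 ≤ 2 * p := by
            by_contra hcon
            push_neg at hcon
            nlinarith [mul_nonneg (show (0:ℤ) ≤ 2 * p - m by omega)
              (show (0:ℤ) ≤ m + 1 - 2 * p by omega)]
          have hcond : QCond m h (p - 1) := by
            refine ⟨by omega, by omega, by nlinarith, by nlinarith⟩
          have eM := qnn_eval m h (p - 1) hpos hcond
          have hpn1 : p + 1 ≤ pn := by
            by_contra hcon
            push_neg at hcon
            nlinarith [mul_nonneg (show (0:ℤ) ≤ p - pn by omega)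
              (show (0:ℤ) ≤ pn + p + 2 - n by omega)]
          rw [eL, eM, ← WithTop.coe_add, ← WithTop.coe_add, WithTop.coe_le_coe]
          linarith
        · rw [if_neg hsp, if_pos hc3]
          obtain ⟨pm, hpm⟩ := qcond_exists m h hmge hpos h2m
          have eM := qnn_eval m h pm hpos hpm
          obtain ⟨d1, d2, d3, d4⟩ := hpm
          have hmono : pm + 1 ≤ pn := by
            by_contra hcon
            push_neg at hcon
            nlinarith [mul_nonneg (show (0:ℤ) ≤ pm - pn by omega)
              (show (0:ℤ) ≤ pn + pm + 2 - n by omega)]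
          rw [eL, eM, ← WithTop.coe_add, ← WithTop.coe_add, WithTop.coe_le_coe]
          linarith
      · -- case ⌊m²/2⌋ < h ≤ ⌊m²/2⌋ + ⌊m/2⌋
        push_neg at hc3
        have hhn : 2 * h ≤ n ^ 2 := by
          obtain ⟨k, hk⟩ : ∃ k, m ^ 2 = k := ⟨_, rfl⟩
          have hnk : n ^ 2 = k + 2 * m + 1 := by linarith
          rw [hk] at hc5
          rw [hnk]
          omega
        obtain ⟨pn, hpn⟩ := qcond_exists n h hn hpos hhn
        have eL := qnn_eval n h pn hpos hpn
        obtain ⟨c1, c2, c3, c4⟩ := hpn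
        rw [qn1n, if_neg (by push_neg; exact ⟨by omega, hc5⟩),
          if_neg (by rintro ⟨p, -, -, -, hple⟩; omega), if_neg (by omega)]
        rw [eL, ← WithTop.coe_add, WithTop.coe_le_coe]
        have hc2 : 2 * ((h + 1) / 2) ≤ h + 1 := by omega
        rcases Int.even_or_odd m with ⟨a, ha⟩ | ⟨a, ha⟩
        · -- m = 2a, n = 2a+1
          have hD : m ^ 2 / 2 = 2 * a ^ 2 := by
            have : m ^ 2 = 0 + (2 * a ^ 2) * 2 := by rw [ha]; ring
            rw [this, Int.add_mul_ediv_right _ _ (by norm_num : (2:ℤ) ≠ 0)]; norm_num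
          have hd : m / 2 = a := by omega
          have hm2' : m ^ 2 = 4 * a ^ 2 := by rw [ha]; ring
          have hn2 : n ^ 2 = 4 * a ^ 2 + 4 * a + 1 := by
            have : 2 * m = 4 * a := by omega
            linarith
          have hpge : a + 1 ≤ pn := by omega
          rw [hD] at hc3 ⊢
          linarith
        · -- m = 2a+1, n = 2a+2
          have hD : m ^ 2 / 2 = 2 * a ^ 2 + 2 * a := by
            have : m ^ 2 = 1 + (2 * a ^ 2 + 2 * a) * 2 := by rw [ha]; ring
            rw [this, Int.add_mul_ediv_right _ _ (by norm_num : (2:ℤ) ≠ 0)]; norm_num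
          have hd : m / 2 = a := by omega
          have hm2' : m ^ 2 = 4 * a ^ 2 + 4 * a + 1 := by rw [ha]; ring
          have hn2 : n ^ 2 = 4 * a ^ 2 + 8 * a + 4 := by
            have : 2 * m = 4 * a + 2 := by omega
            linarith
          have ha0 : 0 ≤ a := by omega
          have hpge : a + 2 ≤ pn := by
            by_contra hcon
            push_neg at hcon
            have hpe : pn = a + 1 := by omega
            have hne : n = 2 * a + 2 := by omega
            rw [hpe, hne] at c3
            have hle : h ≤ 2 * a ^ 2 + 3 * a := by
              have h5 := hc5
              rw [hD, hd] at h5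
              linarith
            nlinarith
          have hge : 2 * a ^ 2 + 2 * a + 1 ≤ h := by
            have h3 := hc3
            rw [hD] at h3
            omega
          rw [hD]
          linarith
end

section
/- For every integer m ≥ 1 and every integer h with h ≤ ⌊m²/2⌋ + ⌊m/2⌋, one has q_{m+1,m}(h) ≤ q_{m+1,m}(h − 2) + 4 in ℤ ∪ {+∞}. -/
lemma sq_div_two' (m : ℤ) : m^2/2 = 2*(m - m/2)*(m/2) := by
  obtain ⟨k, hk⟩ : ∃ k, m/2 = k := ⟨_, rfl⟩
  have h3 : m = 2*k ∨ m = 2*k + 1 := by omega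
  rcases h3 with h3 | h3 <;> subst h3 <;> rw [hk]
  · have h4 : (2*k)^2 = 2*k^2 * 2 := by ring
    rw [h4, Int.mul_ediv_cancel _ two_ne_zero]; ring
  · have h4 : (2*k+1)^2 = 1 + (2*k^2+2*k) * 2 := by ring
    rw [h4, Int.add_mul_ediv_right _ _ two_ne_zero]
    norm_num; ring

lemma Mpar' (m : ℤ) : 2*(m^2/2) = m^2 - m % 2 := by
  obtain ⟨k, hk⟩ : ∃ k, m/2 = k := ⟨_, rfl⟩
  have h3 : m = 2*k ∨ m = 2*k + 1 := by omega
  have h := sq_div_two' m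
  rcases h3 with h3 | h3 <;> subst h3 <;> rw [hk] at h
  · have h5 : (2*k) % 2 = 0 := by omega
    rw [h, h5]; ring
  · have h5 : (2*k+1) % 2 = 1 := by omega
    rw [h, h5]; ring

lemma p_unique' {n h p₁ p₂ : ℤ}
    (H₁ : n - p₁ ≤ p₁ ∧ 1 ≤ n - p₁ ∧ 2*(p₁+1)*(n-p₁-1) < h ∧ h ≤ 2*p₁*(n-p₁))
    (H₂ : n - p₂ ≤ p₂ ∧ 1 ≤ n - p₂ ∧ 2*(p₂+1)*(n-p₂-1) < h ∧ h ≤ 2*p₂*(n-p₂)) :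
    p₁ = p₂ := by
  obtain ⟨a₁, b₁, c₁, d₁⟩ := H₁
  obtain ⟨a₂, b₂, c₂, d₂⟩ := H₂
  by_contra hne
  rcases lt_or_gt_of_ne hne with hlt | hlt
  · nlinarith [mul_nonneg (by omega : (0:ℤ) ≤ p₂ - p₁ - 1) (by omega : (0:ℤ) ≤ p₂ + p₁ + 1 - n)]
  · nlinarith [mul_nonneg (by omega : (0:ℤ) ≤ p₁ - p₂ - 1) (by omega : (0:ℤ) ≤ p₁ + p₂ + 1 - n)]

lemma qnn_val' {n p h : ℤ} (h1 : n - p ≤ p) (h2 : 1 ≤ n - p)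
    (h3 : 2*(p+1)*(n-p-1) < h) (h4 : h ≤ 2*p*(n-p)) :
    qnn n h = ((n^2 + 2*((h+1)/2) - 2*p : ℤ) : WithTop ℤ) := by
  have hh0 : 0 < h := by nlinarith
  have hM : h ≤ n^2/2 := by
    have key : 2 * (2*p*(n-p)) ≤ n^2 := by nlinarith [sq_nonneg (n - 2*p)]
    obtain ⟨A, hA⟩ : ∃ A, 2*p*(n-p) = A := ⟨_, rfl⟩
    rw [hA] at h4 key
    omega
  have hex : ∃ p : ℤ, n - p ≤ p ∧ 1 ≤ n - p ∧
      2 * (p + 1) * (n - p - 1) < h ∧ h ≤ 2 * p * (n - p) := ⟨p, h1, h2, h3, h4⟩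
  rw [qnn, if_neg (by omega), if_neg (by omega), dif_pos hex]
  have hsp := hex.choose_spec
  have heq : hex.choose = p := p_unique' hsp ⟨h1, h2, h3, h4⟩
  rw [heq]

lemma qnn_zero' {n : ℤ} : qnn n 0 = ((n^2 - 2*n : ℤ) : WithTop ℤ) := by
  have : 0 ≤ n^2/2 := Int.ediv_nonneg (sq_nonneg n) (by norm_num)
  rw [qnn, if_neg (by omega), if_pos rfl]

lemma exists_p' {n h : ℤ} (hn : 1 ≤ n) (h0 : 0 < h) (hM : h ≤ n^2/2) :
    ∃ p, n - p ≤ p ∧ 1 ≤ n - p ∧ 2*(p+1)*(n-p-1) < h ∧ h ≤ 2*p*(n-p) := by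
  have key := sq_div_two' n
  obtain ⟨p, ⟨hp1, hp2⟩, hmax⟩ := Int.exists_greatest_of_bdd
    (P := fun p => n ≤ 2*p ∧ h ≤ 2*p*(n-p))
    ⟨n, fun z hz => by
      by_contra hgt
      push_neg at hgt
      have h5 : 2*z*(n-z) ≤ 0 := by nlinarith [hz.1]
      have := hz.2
      omega⟩
    ⟨n - n/2, by omega, by
      have hb : 2*(n - n/2)*(n - (n - n/2)) = 2*(n - n/2)*(n/2) := by ring
      rw [hb, ← key]; exact hM⟩
  refine ⟨p, by omega, ?_, ?_, hp2⟩
  · by_contra hq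
    push_neg at hq
    have : 2*p*(n-p) ≤ 0 := by nlinarith
    omega
  · by_contra hle
    push_neg at hle
    have := hmax (p+1) ⟨by omega, by nlinarith⟩
    omega

lemma special_odd' {n h : ℤ}
    (hs : ∃ p : ℤ, n - p ≤ p ∧ 1 ≤ n - p ∧ h = 2 * p * (n - p) + 1 ∧ h ≤ n ^ 2 / 2) :
    h % 2 = 1 := by
  obtain ⟨p, _, _, he, _⟩ := hs
  obtain ⟨A, hA⟩ : ∃ A, p * (n - p) = A := ⟨_, rfl⟩
  have : h = 2 * A + 1 := by rw [he, ← hA]; ring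
  omega

lemma qn1n_special' {n h : ℤ} (hn : 0 ≤ n)
    (hsp : ∃ p : ℤ, n - p ≤ p ∧ 1 ≤ n - p ∧ h = 2 * p * (n - p) + 1 ∧ h ≤ n ^ 2 / 2) :
    qn1n n h = qnn n h + ((n - 3 : ℤ) : WithTop ℤ) := by
  have h0 : 0 ≤ h := by
    obtain ⟨p, h1, h2, h3, _⟩ := hsp
    nlinarith
  have hnd : 0 ≤ n / 2 := by omega
  have hM : h ≤ n ^ 2 / 2 := hsp.choose_spec.2.2.2
  rw [qn1n, if_neg (by omega), if_pos hsp]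

lemma qn1n_mid' {n h : ℤ} (hn : 0 ≤ n) (h0 : 0 ≤ h) (hM : h ≤ n ^ 2 / 2)
    (hsp : ¬ ∃ p : ℤ, n - p ≤ p ∧ 1 ≤ n - p ∧ h = 2 * p * (n - p) + 1 ∧ h ≤ n ^ 2 / 2) :
    qn1n n h = qnn n h + ((n - 1 : ℤ) : WithTop ℤ) := by
  have hnd : 0 ≤ n / 2 := by omega
  rw [qn1n, if_neg (by omega), if_neg hsp, if_pos hM]

lemma qn1n_tail' {n h : ℤ} (hM : n ^ 2 / 2 < h) (hmax : h ≤ n ^ 2 / 2 + n / 2) :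
    qn1n n h = ((n ^ 2 / 2 + 2 * h - 1 : ℤ) : WithTop ℤ) := by
  have h0 : 0 ≤ n ^ 2 / 2 := Int.ediv_nonneg (sq_nonneg n) (by norm_num)
  rw [qn1n, if_neg (by omega), if_neg (by rintro ⟨p, _, _, _, hle⟩; omega),
    if_neg (by omega)]

lemma qn1n_lb' {n h : ℤ} (hn : 0 ≤ n) (h0 : 0 ≤ h) (hM : h ≤ n ^ 2 / 2) :
    qnn n h + ((n - 3 : ℤ) : WithTop ℤ) ≤ qn1n n h := by
  by_cases hsp : ∃ p : ℤ, n - p ≤ p ∧ 1 ≤ n - p ∧ h = 2 * p * (n - p) + 1 ∧ h ≤ n ^ 2 / 2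
  · rw [qn1n_special' hn hsp]
  · rw [qn1n_mid' hn h0 hM hsp]
    refine add_le_add_right ?_ _
    exact_mod_cast (by omega : (n - 3 : ℤ) ≤ n - 1)

lemma adj' {m h p₁ p₂ : ℤ}
    (hp₁ : m - p₁ ≤ p₁ ∧ 1 ≤ m - p₁ ∧ 2*(p₁+1)*(m-p₁-1) < h ∧ h ≤ 2*p₁*(m-p₁))
    (hp₂ : m - p₂ ≤ p₂ ∧ 1 ≤ m - p₂ ∧ 2*(p₂+1)*(m-p₂-1) < h - 2 ∧ h - 2 ≤ 2*p₂*(m-p₂)) :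
    p₂ = p₁ ∨ p₂ = p₁ + 1 := by
  obtain ⟨a₁, b₁, c₁, d₁⟩ := hp₁
  obtain ⟨a₂, b₂, c₂, d₂⟩ := hp₂
  have hge : ¬ p₂ < p₁ := by
    intro hlt
    have h5 : (0:ℤ) ≤ (p₁ - p₂ - 1)*(p₁ + p₂ + 1 - m) :=
      mul_nonneg (by omega) (by omega)
    have hbr : 2*(p₂+1)*(m-p₂-1) - 2*p₁*(m-p₁) = 2*((p₁ - p₂ - 1)*(p₁ + p₂ + 1 - m)) := by
      ring
    linarith
  have hle : ¬ p₁ + 1 < p₂ := by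
    intro hlt
    have h5 : (1:ℤ)*1 ≤ (p₂ - p₁ - 1)*(p₁ + 1 + p₂ - m) :=
      mul_le_mul (by omega) (by omega) (by norm_num) (by omega)
    have hbr : 2*(p₁+1)*(m-p₁-1) - 2*p₂*(m-p₂) = 2*((p₂ - p₁ - 1)*(p₁ + 1 + p₂ - m)) := by
      ring
    linarith
  omega

lemma crit' {m h p₁ p₂ : ℤ}
    (hp₁ : m - p₁ ≤ p₁ ∧ 1 ≤ m - p₁ ∧ 2*(p₁+1)*(m-p₁-1) < h ∧ h ≤ 2*p₁*(m-p₁))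
    (hp₂ : m - p₂ ≤ p₂ ∧ 1 ≤ m - p₂ ∧ 2*(p₂+1)*(m-p₂-1) < h - 2 ∧ h - 2 ≤ 2*p₂*(m-p₂))
    (hS2 : ∃ p, m - p ≤ p ∧ 1 ≤ m - p ∧ h - 2 = 2*p*(m-p)+1 ∧ h - 2 ≤ m^2/2)
    (hS1 : ¬ ∃ p, m - p ≤ p ∧ 1 ≤ m - p ∧ h = 2*p*(m-p)+1 ∧ h ≤ m^2/2)
    (hh : h ≤ m^2/2) (hadj : p₂ = p₁ ∨ p₂ = p₁ + 1) : p₂ = p₁ := by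
  rcases hadj with he | he
  · exact he
  exfalso
  obtain ⟨p, ha, hb, hc, hd⟩ := hS2
  have hstep1 : m + 2 ≤ 2*p := by
    by_contra hlt
    push_neg at hlt
    have key := sq_div_two' m
    have h2p : 2*p = m ∨ 2*p = m + 1 := by omega
    rcases h2p with h2p | h2p
    · have e1 : m/2 = p := by omega
      rw [e1] at key
      have e2 : (2*p*(m-p) : ℤ) = 2*(m-p)*p := by ring
      rw [e2] at hc
      linarith
    · have e1 : m/2 = p - 1 := by omega
      rw [e1] at key
      have e2 : (2*p*(m-p) : ℤ) = 2*(m-(p-1))*(p-1) := by linear_combination (-2 : ℤ) * h2p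
      rw [e2] at hc
      linarith
  have efm1 : 2*(p-1)*(m-(p-1)) = 2*p*(m-p) + 2*(2*p-m-1) := by ring
  have c1 : 2*((p-1)+1)*(m-(p-1)-1) < h - 2 := by
    have e : 2*((p-1)+1)*(m-(p-1)-1) = 2*p*(m-p) := by ring
    rw [e]; linarith
  have c2 : h - 2 ≤ 2*(p-1)*(m-(p-1)) := by
    rw [efm1]; linarith
  have hp2p : p₂ = p - 1 := p_unique' hp₂ ⟨by omega, by omega, c1, c2⟩
  have hp1 : p₁ = p - 2 := by omega
  have e3 : 2*(p₁+1)*(m-p₁-1) = 2*(p-1)*(m-(p-1)) := by rw [hp1]; ring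
  have hfp1 := hp₁.2.2.1
  rw [e3, efm1] at hfp1
  have hlin : 2*(2*p-m-1) < 3 := by linarith
  have h2p2 : 2*p = m + 2 := by omega
  exact hS1 ⟨p-1, by omega, by omega, by linarith [efm1], hh⟩

/-- Equation (f) of Lemma 5.3: for `m ≥ 1` and every integer `h` with
`h ≤ ⌊m²/2⌋ + ⌊m/2⌋`, `q_(m+1,m)(h) ≤ q_(m+1,m)(h - 2) + 4`. -/
theorem qn1n_step_two (m : ℤ) (hm : 1 ≤ m) (h : ℤ)
    (hmax : h ≤ m ^ 2 / 2 + m / 2) :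
    qn1n m h ≤ qn1n m (h - 2) + ((4 : ℤ) : WithTop ℤ) := by
  have hM0 : 0 ≤ m ^ 2 / 2 := Int.ediv_nonneg (sq_nonneg m) (by norm_num)
  by_cases hlow : h - 2 < 0
  · have ht : qn1n m (h - 2) = ⊤ := by rw [qn1n, if_pos (Or.inl hlow)]
    rw [ht]
    simp
  push_neg at hlow
  have hm2 : 2 ≤ m := by
    by_contra hm1
    push_neg at hm1
    have hm1' : m = 1 := by omega
    have hsq : m ^ 2 = 1 := by rw [hm1']; norm_num
    omega
  have hn0 : (0:ℤ) ≤ m := by omega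
  by_cases hcase : h ≤ m ^ 2 / 2
  · -- middle region
    obtain ⟨p₁, hp₁⟩ := exists_p' (by omega) (by omega) hcase
    have E1 := qnn_val' hp₁.1 hp₁.2.1 hp₁.2.2.1 hp₁.2.2.2
    by_cases hz : h - 2 = 0
    · -- h = 2
      have hS1 : ¬ ∃ p : ℤ, m - p ≤ p ∧ 1 ≤ m - p ∧ h = 2 * p * (m - p) + 1 ∧ h ≤ m ^ 2 / 2 := by
        intro hs
        have := special_odd' hs
        omega
      have hS0 : ¬ ∃ p : ℤ, m - p ≤ p ∧ 1 ≤ m - p ∧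
          h - 2 = 2 * p * (m - p) + 1 ∧ h - 2 ≤ m ^ 2 / 2 := by
        intro hs
        have := special_odd' hs
        omega
      have hq1 : m - p₁ = 1 := by
        obtain ⟨a₁, b₁, c₁, d₁⟩ := hp₁
        by_contra hq
        have hb2 : 2 ≤ m - p₁ := by omega
        nlinarith
      rw [qn1n_mid' hn0 (by omega) hcase hS1, qn1n_mid' hn0 hlow (by omega) hS0, hz,
        qnn_zero', E1]
      have hfin : (m^2 + 2*((h+1)/2) - 2*p₁) + (m - 1) ≤ (m^2 - 2*m) + (m - 1) + 4 := by
        omega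
      exact_mod_cast hfin
    · -- generic middle
      obtain ⟨p₂, hp₂⟩ := exists_p' (n := m) (h := h - 2) (by omega) (by omega) (by omega)
      have E2 := qnn_val' hp₂.1 hp₂.2.1 hp₂.2.2.1 hp₂.2.2.2
      have hadj : p₂ = p₁ ∨ p₂ = p₁ + 1 := adj' hp₁ hp₂
      by_cases hS1 : ∃ p : ℤ, m - p ≤ p ∧ 1 ≤ m - p ∧ h = 2 * p * (m - p) + 1 ∧ h ≤ m ^ 2 / 2
      · by_cases hS2 : ∃ p : ℤ, m - p ≤ p ∧ 1 ≤ m - p ∧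
            h - 2 = 2 * p * (m - p) + 1 ∧ h - 2 ≤ m ^ 2 / 2
        · rw [qn1n_special' hn0 hS1, qn1n_special' hn0 hS2, E1, E2]
          have hfin : (m^2 + 2*((h+1)/2) - 2*p₁) + (m - 3) ≤
              (m^2 + 2*((h - 2 + 1)/2) - 2*p₂) + (m - 3) + 4 := by omega
          exact_mod_cast hfin
        · rw [qn1n_special' hn0 hS1, qn1n_mid' hn0 hlow (by omega) hS2, E1, E2]
          have hfin : (m^2 + 2*((h+1)/2) - 2*p₁) + (m - 3) ≤
              (m^2 + 2*((h - 2 + 1)/2) - 2*p₂) + (m - 1) + 4 := by omega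
          exact_mod_cast hfin
      · by_cases hS2 : ∃ p : ℤ, m - p ≤ p ∧ 1 ≤ m - p ∧
            h - 2 = 2 * p * (m - p) + 1 ∧ h - 2 ≤ m ^ 2 / 2
        · have hpe : p₂ = p₁ := crit' hp₁ hp₂ hS2 hS1 hcase hadj
          rw [qn1n_mid' hn0 (by omega) hcase hS1, qn1n_special' hn0 hS2, E1, E2]
          have hfin : (m^2 + 2*((h+1)/2) - 2*p₁) + (m - 1) ≤
              (m^2 + 2*((h - 2 + 1)/2) - 2*p₂) + (m - 3) + 4 := by omega
          exact_mod_cast hfin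
        · rw [qn1n_mid' hn0 (by omega) hcase hS1, qn1n_mid' hn0 hlow (by omega) hS2, E1, E2]
          have hfin : (m^2 + 2*((h+1)/2) - 2*p₁) + (m - 1) ≤
              (m^2 + 2*((h - 2 + 1)/2) - 2*p₂) + (m - 1) + 4 := by omega
          exact_mod_cast hfin
  · -- tail region
    push_neg at hcase
    rw [qn1n_tail' hcase hmax]
    by_cases hta : m ^ 2 / 2 < h - 2
    · rw [qn1n_tail' hta (by omega)]
      have hfin : (m^2/2 + 2*h - 1 : ℤ) ≤ (m^2/2 + 2*(h-2) - 1) + 4 := by omega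
      exact_mod_cast hfin
    · push_neg at hta
      have key := sq_div_two' m
      have hfP : 2*(m - m/2)*(m - (m - m/2)) = m^2/2 := by
        rw [sq_div_two' m]; ring
      have a1 : m - (m - m/2) ≤ m - m/2 := by omega
      have b1 : 1 ≤ m - (m - m/2) := by omega
      have c1 : 2*((m - m/2)+1)*(m-(m - m/2)-1) < h - 2 := by
        have e : 2*((m - m/2)+1)*(m-(m - m/2)-1) =
            2*(m - m/2)*(m - (m - m/2)) - 2*(2*(m - m/2)-m+1) := by ring
        rw [e, hfP]; omega
      have d1 : h - 2 ≤ 2*(m - m/2)*(m - (m - m/2)) := by rw [hfP]; omega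
      have E2 := qnn_val' a1 b1 c1 d1
      obtain ⟨X, hX⟩ : ∃ X, (m - m/2)*(m - (m - m/2)) = X := ⟨_, rfl⟩
      have hMX : m^2/2 = 2*X := by
        rw [← hfP, ← hX]; ring
      have hpar := Mpar' m
      rcases (by omega : h = m ^ 2 / 2 + 1 ∨ h = m ^ 2 / 2 + 2) with hcv | hcv
      · -- h = M + 1 : use the lower bound m - 3
        refine le_trans ?_ (add_le_add_left (qn1n_lb' hn0 hlow hta) _)
        rw [E2]
        have hfin : (m^2/2 + 2*h - 1 : ℤ) ≤
            (m^2 + 2*((h - 2 + 1)/2) - 2*(m - m/2)) + (m - 3) + 4 := by omega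
        exact_mod_cast hfin
      · -- h = M + 2 : h - 2 = M is even, hence not special
        have hS2 : ¬ ∃ p : ℤ, m - p ≤ p ∧ 1 ≤ m - p ∧
            h - 2 = 2 * p * (m - p) + 1 ∧ h - 2 ≤ m ^ 2 / 2 := by
          intro hs
          have := special_odd' hs
          omega
        rw [qn1n_mid' hn0 hlow hta hS2, E2]
        have hfin : (m^2/2 + 2*h - 1 : ℤ) ≤
            (m^2 + 2*((h - 2 + 1)/2) - 2*(m - m/2)) + (m - 1) + 4 := by omega
        exact_mod_cast hfin
end

section
/- For every integer n ≥ 1, the function q_{n+1,n} is nondecreasing on the nonnegative integers: for all integers h, h' with 0 ≤ h ≤ h', one has q_{n+1,n}(h) ≤ q_{n+1,n}(h') in ℤ ∪ {+∞}. -/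
private lemma P_uniq {n h p p' : ℤ}
    (hp : n - p ≤ p ∧ 1 ≤ n - p ∧ 2*(p+1)*(n-p-1) < h ∧ h ≤ 2*p*(n-p))
    (hp' : n - p' ≤ p' ∧ 1 ≤ n - p' ∧ 2*(p'+1)*(n-p'-1) < h ∧ h ≤ 2*p'*(n-p')) : p = p' := by
  obtain ⟨a1, a2, a3, a4⟩ := hp
  obtain ⟨b1, b2, b3, b4⟩ := hp'
  by_contra hne
  rcases lt_or_gt_of_ne hne with hlt | hlt
  · nlinarith [mul_nonneg (by omega : (0:ℤ) ≤ p' - p - 1) (by omega : (0:ℤ) ≤ p + p' + 1 - n)]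
  · nlinarith [mul_nonneg (by omega : (0:ℤ) ≤ p - p' - 1) (by omega : (0:ℤ) ≤ p + p' + 1 - n)]

private lemma P_exists_aux (n h : ℤ) (hn : 1 ≤ n) (h0 : 0 < h) :
    ∀ k : ℕ, ∀ p : ℤ, n - p ≤ p → n - p ≤ (k:ℤ) → h ≤ 2*p*(n-p) →
    ∃ p', n - p' ≤ p' ∧ 1 ≤ n - p' ∧ 2*(p'+1)*(n-p'-1) < h ∧ h ≤ 2*p'*(n-p') := by
  intro k
  induction k with
  | zero =>
    intro p h1 h2 h3
    exfalso
    have hp1 : 1 ≤ p := by omega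
    nlinarith [mul_nonneg (by omega : (0:ℤ) ≤ 2*p) (by omega : (0:ℤ) ≤ p - n)]
  | succ k ih =>
    intro p h1 h2 h3
    by_cases hc : 2*(p+1)*(n-p-1) < h
    · refine ⟨p, h1, ?_, hc, h3⟩
      by_contra hq
      have hp1 : 1 ≤ p := by omega
      nlinarith [mul_nonneg (by omega : (0:ℤ) ≤ 2*p) (by omega : (0:ℤ) ≤ p - n)]
    · push_neg at hc
      refine ih (p+1) (by omega) (by omega) ?_
      have e : 2*(p+1)*(n-(p+1)) = 2*(p+1)*(n-p-1) := by ring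
      rw [e]; exact hc

private lemma P_exists {n h : ℤ} (hn : 1 ≤ n) (h0 : 0 < h) (hN : h ≤ n^2/2) :
    ∃ p, n - p ≤ p ∧ 1 ≤ n - p ∧ 2*(p+1)*(n-p-1) < h ∧ h ≤ 2*p*(n-p) := by
  have hf : n^2/2 ≤ 2*((n+1)/2)*(n-(n+1)/2) := by
    rcases Int.even_or_odd n with ⟨m, hm⟩ | ⟨m, hm⟩ <;> subst hm
    · have e1 : (m+m)^2 = 4*(m*m) := by ring
      have e2 : ((m+m)+1)/2 = m := by omega
      have e3 : 2*m*((m+m)-m) = 2*(m*m) := by ring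
      rw [e1, e2, e3]
      omega
    · have e1 : (2*m+1)^2 = 4*(m*m+m)+1 := by ring
      have e2 : ((2*m+1)+1)/2 = m+1 := by omega
      have e3 : 2*(m+1)*((2*m+1)-(m+1)) = 2*(m*m+m) := by ring
      rw [e1, e2, e3]
      omega
  exact P_exists_aux n h hn h0 (n - (n+1)/2).toNat ((n+1)/2) (by omega) (by omega) (le_trans hN hf)

open Classical in
private lemma qnn_eq {n h p : ℤ}
    (hp : n - p ≤ p ∧ 1 ≤ n - p ∧ 2*(p+1)*(n-p-1) < h ∧ h ≤ 2*p*(n-p)) :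
    qnn n h = ((n ^ 2 + 2 * ((h + 1) / 2) - 2 * p : ℤ) : WithTop ℤ) := by
  obtain ⟨a1, a2, a3, a4⟩ := hp
  have hpos : 0 < h := by nlinarith [mul_nonneg (by omega : (0:ℤ) ≤ p + 1) (by omega : (0:ℤ) ≤ n - p - 1)]
  have hN : h ≤ n^2/2 := by
    have h4 : 4*(p*(n-p)) ≤ n^2 := by nlinarith [sq_nonneg (n - 2*p)]
    have a4' : h ≤ 2*(p*(n-p)) := by nlinarith
    omega
  have hex : ∃ q : ℤ, n - q ≤ q ∧ 1 ≤ n - q ∧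
      2 * (q + 1) * (n - q - 1) < h ∧ h ≤ 2 * q * (n - q) := ⟨p, a1, a2, a3, a4⟩
  rw [qnn, if_neg (by omega), if_neg (by omega), dif_pos hex]
  have hch : hex.choose = p := P_uniq hex.choose_spec ⟨a1, a2, a3, a4⟩
  rw [hch]

private lemma N_bounds (n : ℤ) : 2*(n^2/2) ≤ n^2 ∧ n^2 ≤ 2*(n^2/2) + 1 := by
  generalize n ^ 2 = a
  omega

open Classical in
private lemma qn1n_step (n : ℤ) (hn : 1 ≤ n) (h : ℤ) (h0 : 0 ≤ h) :
    qn1n n h ≤ qn1n n (h+1) := by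
  have hN0 : (0:ℤ) ≤ n^2/2 := Int.ediv_nonneg (by positivity) (by norm_num)
  have hn2 : (0:ℤ) ≤ n/2 := by omega
  by_cases htop : n^2/2 + n/2 < h + 1
  · have hr : qn1n n (h+1) = ⊤ := by rw [qn1n, if_pos (Or.inr htop)]
    rw [hr]; exact le_top
  push_neg at htop
  -- helper: no special point is even, products are ≥ 1
  by_cases hmid : h + 1 ≤ n^2/2
  · -- region A : both h and h+1 in the qnn region
    rcases eq_or_lt_of_le h0 with h0' | h0'
    · -- h = 0
      subst h0'
      have e01 : (0:ℤ) + 1 = 1 := by norm_num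
      rw [e01] at hmid htop ⊢
      have hn2' : 2 ≤ n := by
        by_contra hcon
        have hn1 : n = 1 := by omega
        subst hn1
        norm_num at hmid
      have hw : n - (n-1) ≤ (n-1) ∧ 1 ≤ n - (n-1) ∧
          2*((n-1)+1)*(n-(n-1)-1) < 1 ∧ (1:ℤ) ≤ 2*(n-1)*(n-(n-1)) := by
        constructor; · omega
        constructor; · omega
        constructor; · have : 2*((n-1)+1)*(n-(n-1)-1) = 0 := by ring
                       omega
        · nlinarith
      have hq1 : qnn n 1 = ((n ^ 2 + 2 * ((1 + 1) / 2) - 2 * (n-1) : ℤ) : WithTop ℤ) := qnn_eq hw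
      have hq0 : qnn n 0 = ((n ^ 2 - 2 * n : ℤ) : WithTop ℤ) := by
        rw [qnn, if_neg (by omega), if_pos rfl]
      have hs0 : ¬ ∃ p : ℤ, n - p ≤ p ∧ 1 ≤ n - p ∧ (0:ℤ) = 2 * p * (n - p) + 1 ∧ (0:ℤ) ≤ n ^ 2 / 2 := by
        rintro ⟨p, c1, c2, c3, -⟩
        nlinarith [mul_pos (by omega : (0:ℤ) < p) (by omega : (0:ℤ) < n - p)]
      have hs1 : ¬ ∃ p : ℤ, n - p ≤ p ∧ 1 ≤ n - p ∧ (1:ℤ) = 2 * p * (n - p) + 1 ∧ (1:ℤ) ≤ n ^ 2 / 2 := by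
        rintro ⟨p, c1, c2, c3, -⟩
        nlinarith [mul_pos (by omega : (0:ℤ) < p) (by omega : (0:ℤ) < n - p)]
      rw [qn1n, if_neg (by omega), if_neg hs0, if_pos (by omega), hq0]
      rw [qn1n, if_neg (by omega), if_neg hs1, if_pos (by omega), hq1]
      rw [← WithTop.coe_add, ← WithTop.coe_add, WithTop.coe_le_coe]
      omega
    · -- 0 < h
      obtain ⟨p, a1, a2, a3, a4⟩ := P_exists hn h0' (by omega)
      obtain ⟨p', b1, b2, b3, b4⟩ := P_exists hn (by omega : (0:ℤ) < h+1) hmid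
      have key : p' ≤ p := by
        by_contra hk
        push_neg at hk
        nlinarith [mul_nonneg (by omega : (0:ℤ) ≤ p' - p - 1) (by omega : (0:ℤ) ≤ p + p' + 1 - n)]
      have hq : qnn n h = ((n ^ 2 + 2 * ((h + 1) / 2) - 2 * p : ℤ) : WithTop ℤ) :=
        qnn_eq ⟨a1, a2, a3, a4⟩
      have hq' : qnn n (h+1) = ((n ^ 2 + 2 * ((h + 1 + 1) / 2) - 2 * p' : ℤ) : WithTop ℤ) :=
        qnn_eq ⟨b1, b2, b3, b4⟩
      by_cases hsp' : ∃ q : ℤ, n - q ≤ q ∧ 1 ≤ n - q ∧ h + 1 = 2 * q * (n - q) + 1 ∧ h + 1 ≤ n ^ 2 / 2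
      · obtain ⟨r, c1, c2, c3, c4⟩ := hsp'
        have hheq : h = 2 * r * (n - r) := by omega
        have hr : r = p := by
          refine P_uniq ⟨c1, c2, ?_, by omega⟩ ⟨a1, a2, a3, a4⟩
          nlinarith
        rw [hr] at hheq
        have hplt : p' < p := by
          rcases lt_or_ge p' p with hlt | hle
          · exact hlt
          exfalso
          have hfle : 2*p'*(n-p') ≤ 2*p*(n-p) := by
            nlinarith [mul_nonneg (by omega : (0:ℤ) ≤ p' - p) (by omega : (0:ℤ) ≤ p + p' - n)]
          omega
        have hsp : ¬ ∃ q : ℤ, n - q ≤ q ∧ 1 ≤ n - q ∧ h = 2 * q * (n - q) + 1 ∧ h ≤ n ^ 2 / 2 := by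
          rintro ⟨s, d1, d2, d3, -⟩
          have e1 : h = 2 * (p * (n - p)) := by rw [hheq]; ring
          have e2 : h = 2 * (s * (n - s)) + 1 := by rw [d3]; ring
          omega
        rw [qn1n, if_neg (by omega), if_neg hsp, if_pos (by omega), hq]
        rw [qn1n, if_neg (by omega), if_pos ⟨r, c1, c2, c3, c4⟩, hq']
        rw [← WithTop.coe_add, ← WithTop.coe_add, WithTop.coe_le_coe]
        omega
      · by_cases hsp : ∃ q : ℤ, n - q ≤ q ∧ 1 ≤ n - q ∧ h = 2 * q * (n - q) + 1 ∧ h ≤ n ^ 2 / 2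
        · rw [qn1n, if_neg (by omega), if_pos hsp, hq]
          rw [qn1n, if_neg (by omega), if_neg hsp', if_pos hmid, hq']
          rw [← WithTop.coe_add, ← WithTop.coe_add, WithTop.coe_le_coe]
          omega
        · rw [qn1n, if_neg (by omega), if_neg hsp, if_pos (by omega), hq]
          rw [qn1n, if_neg (by omega), if_neg hsp', if_pos hmid, hq']
          rw [← WithTop.coe_add, ← WithTop.coe_add, WithTop.coe_le_coe]
          omega
  · push_neg at hmid
    by_cases hB : h ≤ n^2/2
    · -- h = N
      have hNh : h = n^2/2 := by omega
      have hn2' : 2 ≤ n := by omega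
      have hNpos : (0:ℤ) < n^2/2 := by nlinarith [N_bounds n, sq_nonneg (n-2)]
      obtain ⟨p, a1, a2, a3, a4⟩ := P_exists hn (by omega : (0:ℤ) < h) hB
      have hq : qnn n h = ((n ^ 2 + 2 * ((h + 1) / 2) - 2 * p : ℤ) : WithTop ℤ) :=
        qnn_eq ⟨a1, a2, a3, a4⟩
      have hNeven : ∃ j : ℤ, n^2/2 = 2*j := by
        rcases Int.even_or_odd n with ⟨m, hm⟩ | ⟨m, hm⟩ <;> subst hm
        · have e1 : (m+m)^2 = 4*(m*m) := by ring
          exact ⟨m*m, by rw [e1]; omega⟩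
        · have e1 : (2*m+1)^2 = 4*(m*m+m)+1 := by ring
          exact ⟨m*m+m, by rw [e1]; omega⟩
      obtain ⟨j, hj⟩ := hNeven
      have hsp : ¬ ∃ q : ℤ, n - q ≤ q ∧ 1 ≤ n - q ∧ h = 2 * q * (n - q) + 1 ∧ h ≤ n ^ 2 / 2 := by
        rintro ⟨s, d1, d2, d3, -⟩
        have e2 : h = 2 * (s * (n - s)) + 1 := by rw [d3]; ring
        omega
      have hsp' : ¬ ∃ q : ℤ, n - q ≤ q ∧ 1 ≤ n - q ∧ h + 1 = 2 * q * (n - q) + 1 ∧ h + 1 ≤ n ^ 2 / 2 := by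
        rintro ⟨s, -, -, -, d4⟩; omega
      rw [qn1n, if_neg (by omega), if_neg hsp, if_pos hB, hq]
      rw [qn1n, if_neg (by omega), if_neg hsp', if_neg (by omega)]
      rw [← WithTop.coe_add, WithTop.coe_le_coe]
      have h2p : n ≤ 2*p := by omega
      obtain ⟨nb1, nb2⟩ := N_bounds n
      omega
    · -- N < h
      push_neg at hB
      have hsp : ¬ ∃ q : ℤ, n - q ≤ q ∧ 1 ≤ n - q ∧ h = 2 * q * (n - q) + 1 ∧ h ≤ n ^ 2 / 2 := by
        rintro ⟨s, -, -, -, d4⟩; omega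
      have hsp' : ¬ ∃ q : ℤ, n - q ≤ q ∧ 1 ≤ n - q ∧ h + 1 = 2 * q * (n - q) + 1 ∧ h + 1 ≤ n ^ 2 / 2 := by
        rintro ⟨s, -, -, -, d4⟩; omega
      rw [qn1n, if_neg (by omega), if_neg hsp, if_neg (by omega)]
      rw [qn1n, if_neg (by omega), if_neg hsp', if_neg (by omega)]
      rw [WithTop.coe_le_coe]
      omega

/-- For `n ≥ 1`, the function `q_(n+1,n)` is nondecreasing on the nonnegative
integers. -/
theorem qn1n_monotone (n : ℤ) (hn : 1 ≤ n) (h h' : ℤ) (h0 : 0 ≤ h) (hle : h ≤ h') :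
    qn1n n h ≤ qn1n n h' := by
  obtain ⟨k, rfl⟩ : ∃ k : ℕ, h' = h + k := ⟨(h' - h).toNat, by omega⟩
  clear hle
  induction k with
  | zero => norm_num
  | succ k ih =>
    have hstep := qn1n_step n hn (h + k) (by omega)
    have e : h + ((k + 1 : ℕ) : ℤ) = (h + (k : ℤ)) + 1 := by push_cast; ring
    rw [e]
    exact ih.trans hstep
end
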